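/- Let n, k, v, d be natural numbers with d ≥ 1 and 1 ≤ k ≤ v < n. Then d · k · ((n − v)/v) · ((v − k)/n)^{dk} < d · ((n − v) · C(v, k−1)/C(n,k)) · (C(v,k)/C(n,k))^{d−1} (all quantities as real numbers). -/

import Mathlib

/-- Lower bound on the probability `p₁` that a random edge connects a vertex set
of size `v` to exactly one vertex outside of it:
`dk·((n−v)/v)·((v−k)/n)^{dk} < d·((n−v)·C(v,k−1)/C(n,k))·(C(v,k)/C(n,k))^{d−1}`. -/
theorem stmt_12 (n k v d : ℕ) (hd : 1 ≤ d) (hk : 1 ≤ k) (hkv : k ≤ v)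
    (hvn : v < n) :
    (d : ℝ) * k * (((n : ℝ) - v) / v) * ((((v : ℝ) - k) / n) ^ (d * k)) <
      (d : ℝ) * (((n : ℝ) - v) * (v.choose (k - 1)) / n.choose k) *
        ((v.choose k : ℝ) / n.choose k) ^ (d - 1) := by
  have hv : 0 < v := hk.trans hkv
  have hn : 0 < n := hv.trans hvn
  have hkn : k ≤ n := hkv.trans hvn.le
  have hnR : (0:ℝ) < n := by exact_mod_cast hn
  have hvR : (0:ℝ) < v := by exact_mod_cast hv
  have hcn : 0 < n.choose k := Nat.choose_pos hkn
  have hcv : 0 < v.choose k := Nat.choose_pos hkv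
  have hcnR : (0:ℝ) < n.choose k := by exact_mod_cast hcn
  have hcvR : (0:ℝ) < v.choose k := by exact_mod_cast hcv
  have hAR : (0:ℝ) < (n:ℝ) - v := by
    have : (v:ℝ) < n := by exact_mod_cast hvn
    linarith
  -- natural number key inequality
  have hnat : (v - k)^k * n.choose k * (Nat.factorial k) < v.choose k * (Nat.factorial k) * n^k := by
    have h1 : (v - k)^k < (v + 1 - k)^k :=
      Nat.pow_lt_pow_left (by omega) (by omega)
    have h2 : (v + 1 - k)^k ≤ v.descFactorial k := v.pow_sub_le_descFactorial k
    have h3 : n.descFactorial k ≤ n^k := n.descFactorial_le_pow k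
    have hnk : 0 < n ^ k := Nat.pow_pos hn
    calc (v - k)^k * n.choose k * (Nat.factorial k)
        = (v - k)^k * n.descFactorial k := by
          rw [Nat.descFactorial_eq_factorial_mul_choose]; ring
      _ ≤ (v - k)^k * n^k := Nat.mul_le_mul_left _ h3
      _ < (v + 1 - k)^k * n^k := Nat.mul_lt_mul_of_lt_of_le h1 le_rfl hnk
      _ ≤ v.descFactorial k * n^k := Nat.mul_le_mul_right _ h2
      _ = v.choose k * (Nat.factorial k) * n^k := by
          rw [Nat.descFactorial_eq_factorial_mul_choose]; ring
  have hnat' : (v - k)^k * n.choose k < v.choose k * n^k :=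
    Nat.lt_of_mul_lt_mul_right (a := (Nat.factorial k)) (by
      calc (v-k)^k * n.choose k * (Nat.factorial k) < v.choose k * (Nat.factorial k) * n^k := hnat
        _ = v.choose k * n^k * (Nat.factorial k) := by ring)
  -- real ratio bound
  have hx : (((v:ℝ) - k) / n) ^ k < (v.choose k : ℝ) / n.choose k := by
    have hcast : ((v:ℝ) - k) = ((v - k : ℕ) : ℝ) := by
      push_cast [hkv]; ring
    rw [hcast, div_pow, div_lt_div_iff₀ (by positivity) hcnR]
    exact_mod_cast hnat'
  have hx0 : (0:ℝ) ≤ ((v:ℝ) - k) / n := by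
    have : (k:ℝ) ≤ v := by exact_mod_cast hkv
    apply div_nonneg <;> linarith
  -- choose identity bound
  have hch : (k:ℝ) * v.choose k ≤ (v:ℝ) * v.choose (k - 1) := by
    have : v.choose k * k ≤ v.choose (k-1) * v := by
      have := Nat.choose_succ_right_eq v (k - 1)
      rw [Nat.sub_add_cancel hk] at this
      calc v.choose k * k = v.choose (k-1) * (v - (k-1)) := this
        _ ≤ v.choose (k-1) * v := Nat.mul_le_mul_left _ (Nat.sub_le _ _)
    have := this
    have hc : (v.choose k : ℝ) * k ≤ (v.choose (k-1) : ℝ) * v := by exact_mod_cast this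
    linarith
  set r : ℝ := (v.choose k : ℝ) / n.choose k with hrdef
  have hr0 : 0 < r := div_pos hcvR hcnR
  have hdR : (1:ℝ) ≤ d := by exact_mod_cast hd
  have hkR : (1:ℝ) ≤ k := by exact_mod_cast hk
  -- rewrite LHS power
  have hpow : ((((v:ℝ) - k) / n) ^ (d * k)) = ((((v:ℝ) - k) / n) ^ k) ^ d := by
    rw [← pow_mul, mul_comm]
  rw [hpow]
  have step1 : (d : ℝ) * k * (((n : ℝ) - v) / v) * (((((v:ℝ) - k) / n) ^ k) ^ d)
      < (d : ℝ) * k * (((n : ℝ) - v) / v) * r ^ d := by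
    apply mul_lt_mul_of_pos_left
    · exact pow_lt_pow_left₀ hx (by positivity) (by omega)
    · positivity
  refine step1.trans_le ?_
  have hrd : r ^ d = r * r ^ (d - 1) := by
    nth_rewrite 1 [show d = 1 + (d - 1) by omega]
    rw [pow_add, pow_one]
  rw [hrd]
  have key : (k:ℝ) * (((n : ℝ) - v) / v) * r ≤ ((n : ℝ) - v) * (v.choose (k-1)) / n.choose k := by
    rw [hrdef]
    have e1 : (k:ℝ) * (((n : ℝ) - v) / v) * ((v.choose k : ℝ) / n.choose k)
        = ((k:ℝ) * (v.choose k : ℝ) * ((n:ℝ) - v)) / ((v:ℝ) * n.choose k) := by ring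
    rw [e1, div_le_div_iff₀ (by positivity) hcnR]
    nlinarith [mul_le_mul_of_nonneg_left hch (le_of_lt hAR), hcnR.le, hAR.le]
  calc (d : ℝ) * k * (((n : ℝ) - v) / v) * (r * r ^ (d-1))
      = (d : ℝ) * ((k:ℝ) * (((n : ℝ) - v) / v) * r) * r ^ (d-1) := by ring
    _ ≤ (d : ℝ) * (((n : ℝ) - v) * (v.choose (k-1)) / n.choose k) * r ^ (d-1) := by
        apply mul_le_mul_of_nonneg_right _ (by positivity)
        apply mul_le_mul_of_nonneg_left key (by positivity)
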